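/- For all complex numbers x, t with real parts at least -ε and imaginary parts in [-ε, ε], where ε is sufficiently small (e.g. ε < (1/4)·log 3), the quantity |e^{x/2}·e^{t/2} / (e^x + e^t - 1)| is bounded by a constant independent of x, t, and ε. -/

import Mathlib

open Complex Real

/-- The region `D_ε = {α ∈ ℂ : -ε ≤ Im α ≤ ε, -ε ≤ Re α}`. -/
def Deps (ε : ℝ) : Set ℂ := {α : ℂ | -ε ≤ α.im ∧ α.im ≤ ε ∧ -ε ≤ α.re}

/-- For all `x, t ∈ D_ε` with `ε` sufficiently small (e.g. `ε < (1/4)·log 3`),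
`|e^{x/2} e^{t/2} / (e^x + e^t - 1)|` is bounded by a constant independent of
`x`, `t` and `ε`. -/
lemma bounded_half_half_aux {ε p q : ℝ} (hε : 0 < ε) (hε2 : ε ≤ 0.347)
    (hp : 1 - ε/2 ≤ p) (hq : 1 - ε/2 ≤ q) :
    (0.1:ℝ) ≤ (1 - ε^2/2) * (p^2 + q^2) - 1 ∧
      p * q ≤ 10 * ((1 - ε^2/2) * (p^2 + q^2) - 1) := by
  have hp0 : (0:ℝ) < p := by linarith
  have hq0 : (0:ℝ) < q := by linarith
  have hc09 : (0.9:ℝ) ≤ 1 - ε^2/2 := by nlinarith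
  have hpq : (0.68:ℝ) ≤ p * q := by
    nlinarith [mul_le_mul hp hq (by linarith) (by linarith : (0:ℝ) ≤ p)]
  constructor
  · nlinarith [sq_nonneg (p - q)]
  · nlinarith [sq_nonneg (p - q),
      mul_nonneg (by linarith : (0:ℝ) ≤ 1 - ε^2/2) (sq_nonneg (p - q))]

theorem bounded_half_half :
    ∃ C : ℝ, ∀ ε : ℝ, 0 < ε → ε < (1/4) * Real.log 3 →
      ∀ x t : ℂ, x ∈ Deps ε → t ∈ Deps ε →
        ‖Complex.exp (x/2) * Complex.exp (t/2) /
          (Complex.exp x + Complex.exp t - 1)‖ ≤ C := by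
  use 10
  intro ε hε hε' x t hx ht
  obtain ⟨hxm, hxM, hxr⟩ := hx
  obtain ⟨htm, htM, htr⟩ := ht
  have hlog : Real.log 3 ≤ 1.3863 := by
    calc Real.log 3 ≤ Real.log 4 := Real.log_le_log (by norm_num) (by norm_num)
    _ = 2 * Real.log 2 := by
        rw [show (4:ℝ) = 2^2 by norm_num, Real.log_pow]; push_cast; ring
    _ ≤ 1.3863 := by have := Real.log_two_lt_d9; linarith
  have hε2 : ε ≤ 0.347 := by linarith
  set p := Real.exp (x.re/2) with hpdef
  set q := Real.exp (t.re/2) with hqdef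
  have hp0 : 0 < p := Real.exp_pos _
  have hq0 : 0 < q := Real.exp_pos _
  have hp : 1 - ε/2 ≤ p := by
    have h1 : (-(ε/2)) + 1 ≤ Real.exp (-(ε/2)) := Real.add_one_le_exp _
    have h2 : Real.exp (-(ε/2)) ≤ p := Real.exp_le_exp.2 (by linarith)
    linarith
  have hq : 1 - ε/2 ≤ q := by
    have h1 : (-(ε/2)) + 1 ≤ Real.exp (-(ε/2)) := Real.add_one_le_exp _
    have h2 : Real.exp (-(ε/2)) ≤ q := Real.exp_le_exp.2 (by linarith)
    linarith
  have hcx : 1 - ε^2/2 ≤ Real.cos x.im := by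
    have := Real.one_sub_sq_div_two_le_cos (x := x.im)
    nlinarith
  have hct : 1 - ε^2/2 ≤ Real.cos t.im := by
    have := Real.one_sub_sq_div_two_le_cos (x := t.im)
    nlinarith
  have hpx : Real.exp x.re = p^2 := by
    rw [hpdef, sq, ← Real.exp_add]; norm_num
  have hqt : Real.exp t.re = q^2 := by
    rw [hqdef, sq, ← Real.exp_add]; norm_num
  -- numerator norm
  have hnum : ‖Complex.exp (x/2) * Complex.exp (t/2)‖ = p * q := by
    rw [norm_mul, Complex.norm_exp,
      Complex.norm_exp]
    congr 1 <;> · congr 1; simp [Complex.div_re]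
  -- denominator lower bound via real part
  have hre : (Complex.exp x + Complex.exp t - 1).re
      = Real.exp x.re * Real.cos x.im + Real.exp t.re * Real.cos t.im - 1 := by
    simp [Complex.exp_re]
  have hkey : (1 - ε^2/2) * (p^2 + q^2) - 1
      ≤ ‖Complex.exp x + Complex.exp t - 1‖ := by
    have h1 : (Complex.exp x + Complex.exp t - 1).re
        ≤ ‖Complex.exp x + Complex.exp t - 1‖ := by
      exact Complex.re_le_norm _
    rw [hre, hpx, hqt] at h1
    nlinarith [sq_nonneg p, sq_nonneg q]
  obtain ⟨haux1, haux2⟩ := bounded_half_half_aux hε hε2 hp hq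
  have hDpos : 0 < ‖Complex.exp x + Complex.exp t - 1‖ := by linarith
  rw [norm_div, hnum, div_le_iff₀ hDpos]
  calc p * q ≤ 10 * ((1 - ε^2/2) * (p^2 + q^2) - 1) := haux2
    _ ≤ 10 * ‖Complex.exp x + Complex.exp t - 1‖ := by linarith
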